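/- If f decomposes additively as f(X) = Σ_{A ⊆ F} f_A(X_A), then the interventional SHAP part of feature i depends only on the components containing i: φ_{i,int}(f, x) = φ_{i,int}(Σ_{A : i ∈ A} f_A, x). In particular all additive components f_A with i ∉ A contribute zero to φ_{i,int}. -/

import Mathlib

/-- `upd x S z` is the vector `[x_S, z_{S̄}]`. -/
noncomputable def upd {M : ℕ} (x : Fin M → ℝ) (S : Finset (Fin M)) (z : Fin M → ℝ) :
    Fin M → ℝ := fun j => if j ∈ S then x j else z j

/-- The coalition `S^R` of features preceding feature `i` in the permutation `R`. -/
def SR {M : ℕ} (i : Fin M) (R : Equiv.Perm (Fin M)) : Finset (Fin M) :=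
  Finset.univ.filter fun j => R.symm j < R.symm i

/-- The (permutation-averaged) interventional SHAP part of feature `i` at sample `x`
of the model `f`, where `CE S g = E[g(X) | X_S = x_S]`. -/
noncomputable def phiInt {M : ℕ} (CE : Finset (Fin M) → ((Fin M → ℝ) → ℝ) → ℝ)
    (i : Fin M) (f : (Fin M → ℝ) → ℝ) (x : Fin M → ℝ) : ℝ :=
  (1 / (M.factorial : ℝ)) * ∑ R : Equiv.Perm (Fin M),
    (CE (SR i R) (fun z => f (upd x (insert i (SR i R)) z))
      - CE (SR i R) (fun z => f (upd x (SR i R) z)))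

lemma CE_sum {M : ℕ} (CE : Finset (Fin M) → ((Fin M → ℝ) → ℝ) → ℝ)
    (hadd : ∀ (S : Finset (Fin M)) (g h : (Fin M → ℝ) → ℝ),
      CE S (fun z => g z + h z) = CE S g + CE S h)
    (hzero : ∀ S : Finset (Fin M), CE S (fun _ => (0 : ℝ)) = 0)
    (S : Finset (Fin M)) (T : Finset (Finset (Fin M)))
    (g : Finset (Fin M) → (Fin M → ℝ) → ℝ) :
    CE S (fun z => ∑ A ∈ T, g A z) = ∑ A ∈ T, CE S (g A) := by
  induction T using Finset.induction with
  | empty => simpa using hzero S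
  | insert a T' hA ih =>
    rw [Finset.sum_insert hA]
    have : CE S (fun z => ∑ A ∈ insert a T', g A z)
        = CE S (fun z => g a z + ∑ A ∈ T', g A z) := by
      congr 1; funext z; rw [Finset.sum_insert hA]
    rw [this, hadd, ih]

/-- If `f` decomposes additively as `f(X) = Σ_{A ⊆ F} f_A(X_A)` with each component
`f_A` depending only on the coordinates in `A`, then the interventional SHAP part of
feature `i` depends only on the components containing `i`:
`φ_{i,int}(f, x) = φ_{i,int}(Σ_{A : i ∈ A} f_A, x)`. -/
theorem additive_components_interventional {M : ℕ} (i : Fin M) (x : Fin M → ℝ)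
    (fA : Finset (Fin M) → ((Fin M → ℝ) → ℝ))
    (hdep : ∀ (A : Finset (Fin M)) (z w : Fin M → ℝ),
      (∀ j ∈ A, z j = w j) → fA A z = fA A w)
    (CE : Finset (Fin M) → ((Fin M → ℝ) → ℝ) → ℝ)
    (hadd : ∀ (S : Finset (Fin M)) (g h : (Fin M → ℝ) → ℝ),
      CE S (fun z => g z + h z) = CE S g + CE S h)
    (hzero : ∀ S : Finset (Fin M), CE S (fun _ => (0 : ℝ)) = 0) :
    phiInt CE i (fun z => ∑ A ∈ Finset.univ.powerset, fA A z) x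
      = phiInt CE i
          (fun z => ∑ A ∈ Finset.univ.powerset.filter (fun A => i ∈ A), fA A z) x := by
  unfold phiInt
  congr 1
  apply Finset.sum_congr rfl
  intro R _
  set S := SR i R with hS
  rw [CE_sum CE hadd hzero S _ (fun A z => fA A (upd x (insert i S) z)),
      CE_sum CE hadd hzero S _ (fun A z => fA A (upd x S z)),
      CE_sum CE hadd hzero S _ (fun A z => fA A (upd x (insert i S) z)),
      CE_sum CE hadd hzero S _ (fun A z => fA A (upd x S z)),
      ← Finset.sum_sub_distrib, ← Finset.sum_sub_distrib,
      ← Finset.sum_filter_add_sum_filter_not Finset.univ.powerset (fun A => i ∈ A)]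
  have hzero' : ∑ A ∈ Finset.univ.powerset.filter (fun A => ¬ i ∈ A),
      (CE S (fun z => fA A (upd x (insert i S) z)) - CE S (fun z => fA A (upd x S z))) = 0 := by
    apply Finset.sum_eq_zero
    intro A hA
    simp only [Finset.mem_filter] at hA
    have : (fun z => fA A (upd x (insert i S) z)) = fun z => fA A (upd x S z) := by
      funext z
      apply hdep
      intro j hj
      have hji : j ≠ i := fun h => hA.2 (h ▸ hj)
      simp [upd, Finset.mem_insert, hji]
    rw [this]
    ring
  rw [hzero']
  ring
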